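/- (Hoeffding's identity, nonnegative case) Let U, W be nonnegative random variables with E[U²] < ∞ and E[W²] < ∞. Then Cov(U, W) = ∫₀^∞ ∫₀^∞ [P(U ≤ u, W ≤ w) - P(U ≤ u)P(W ≤ w)] du dw = ∫₀^∞ ∫₀^∞ [P(U > u, W > w) - P(U > u)P(W > w)] du dw. -/

import Mathlib

open MeasureTheory Real Set ENNReal

/-- Hoeffding's covariance identity for nonnegative square-integrable random variables. -/
theorem hoeffding_identity (Ω : Type*) [MeasurableSpace Ω] (μ : Measure Ω)
    [IsProbabilityMeasure μ]
    (U W : Ω → ℝ) (hU : Measurable U) (hW : Measurable W)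
    (hUnonneg : ∀ ω, 0 ≤ U ω) (hWnonneg : ∀ ω, 0 ≤ W ω)
    (hU2 : MeasureTheory.MemLp U 2 μ) (hW2 : MeasureTheory.MemLp W 2 μ) :
    ((∫ ω, U ω * W ω ∂μ) - (∫ ω, U ω ∂μ) * ∫ ω, W ω ∂μ =
      ∫ u in Set.Ioi (0 : ℝ), ∫ w in Set.Ioi (0 : ℝ),
        ((μ {ω | U ω ≤ u ∧ W ω ≤ w}).toReal -
          (μ {ω | U ω ≤ u}).toReal * (μ {ω | W ω ≤ w}).toReal)) ∧
    ((∫ ω, U ω * W ω ∂μ) - (∫ ω, U ω ∂μ) * ∫ ω, W ω ∂μ =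
      ∫ u in Set.Ioi (0 : ℝ), ∫ w in Set.Ioi (0 : ℝ),
        ((μ {ω | u < U ω ∧ w < W ω}).toReal -
          (μ {ω | u < U ω}).toReal * (μ {ω | w < W ω}).toReal)) := by
  -- basic integrabilities
  have hUint : Integrable U μ := hU2.integrable (by norm_num)
  have hWint : Integrable W μ := hW2.integrable (by norm_num)
  have hUW : Integrable (fun ω => U ω * W ω) μ := by
    have h1 : MemLp (U • W) 1 μ := hW2.smul hU2 (hpqr := ⟨by rw [ENNReal.inv_two_add_inv_two, inv_one]⟩)
    exact memLp_one_iff_integrable.mp h1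
  -- tail sets
  have hS : ∀ u : ℝ, MeasurableSet {ω | u < U ω} :=
    fun u => measurableSet_lt measurable_const hU
  have hT : ∀ w : ℝ, MeasurableSet {ω | w < W ω} :=
    fun w => measurableSet_lt measurable_const hW
  have hTmono : Antitone fun w : ℝ => μ {ω | w < W ω} :=
    fun w₁ w₂ h => measure_mono (fun ω hw => lt_of_le_of_lt h hw)
  have hSmono : Antitone fun u : ℝ => μ {ω | u < U ω} :=
    fun u₁ u₂ h => measure_mono (fun ω hw => lt_of_le_of_lt h hw)
  have hTmeas : Measurable fun w : ℝ => μ {ω | w < W ω} := hTmono.measurable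
  have hSmeas : Measurable fun u : ℝ => μ {ω | u < U ω} := hSmono.measurable
  -- layer cake (real) for U and W
  have hWlayer : ∫ ω, W ω ∂μ = ∫ w in Ioi (0:ℝ), (μ {ω | w < W ω}).toReal :=
    hWint.integral_eq_integral_meas_lt (ae_of_all _ hWnonneg)
  have hUlayer : ∫ ω, U ω ∂μ = ∫ u in Ioi (0:ℝ), (μ {ω | u < U ω}).toReal :=
    hUint.integral_eq_integral_meas_lt (ae_of_all _ hUnonneg)
  -- the double tail function
  set A : ℝ → ℝ≥0∞ := fun u => ∫⁻ w in Ioi (0:ℝ), μ {ω | u < U ω ∧ w < W ω} with hA_def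
  have hA_eq : ∀ u, A u = ∫⁻ ω in {ω | u < U ω}, ENNReal.ofReal (W ω) ∂μ := by
    intro u
    have key := lintegral_eq_lintegral_meas_lt (μ.restrict {ω | u < U ω})
      (ae_of_all _ hWnonneg) hW.aemeasurable
    rw [hA_def]
    simp only [key]
    apply lintegral_congr
    intro w
    rw [Measure.restrict_apply (hT w)]
    congr 1
    ext ω
    simp only [Set.mem_inter_iff, Set.mem_setOf_eq]
    tauto
  have hA_le : ∀ u, A u ≤ ∫⁻ ω, ENNReal.ofReal (W ω) ∂μ := by
    intro u
    rw [hA_eq u]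
    exact lintegral_mono' Measure.restrict_le_self le_rfl
  have hWlint : (∫⁻ ω, ENNReal.ofReal (W ω) ∂μ) < ∞ := hWint.lintegral_lt_top
  have hA_lt : ∀ u, A u < ∞ := fun u => lt_of_le_of_lt (hA_le u) hWlint
  have hAmono : Antitone A := by
    intro u₁ u₂ h
    exact lintegral_mono (fun w => measure_mono (fun ω hw => ⟨lt_of_le_of_lt h hw.1, hw.2⟩))
  have hAmeas : Measurable A := hAmono.measurable
  -- double layer cake: ∫⁻ A = ∫⁻ ofReal (U*W)
  have hdouble : (∫⁻ u in Ioi (0:ℝ), A u) = ∫⁻ ω, ENNReal.ofReal (U ω * W ω) ∂μ := by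
    set ν : Measure Ω := μ.withDensity (fun ω => ENNReal.ofReal (W ω)) with hν_def
    have key := lintegral_eq_lintegral_meas_lt ν (ae_of_all _ hUnonneg) hU.aemeasurable
    have h1 : ∀ u : ℝ, ν {ω | u < U ω} = A u := by
      intro u
      rw [hν_def, withDensity_apply _ (hS u), hA_eq u]
    have h2 : (∫⁻ ω, ENNReal.ofReal (U ω) ∂ν) = ∫⁻ ω, ENNReal.ofReal (U ω * W ω) ∂μ := by
      rw [hν_def, lintegral_withDensity_eq_lintegral_mul μ hW.ennreal_ofReal
        hU.ennreal_ofReal]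
      apply lintegral_congr
      intro ω
      simp only [Pi.mul_apply]
      rw [← ENNReal.ofReal_mul (hWnonneg ω), mul_comm]
    calc (∫⁻ u in Ioi (0:ℝ), A u) = ∫⁻ u in Ioi (0:ℝ), ν {ω | u < U ω} := by
          exact lintegral_congr fun u => (h1 u).symm
      _ = ∫⁻ ω, ENNReal.ofReal (U ω) ∂ν := key.symm
      _ = ∫⁻ ω, ENNReal.ofReal (U ω * W ω) ∂μ := h2
  have hUWlint : (∫⁻ ω, ENNReal.ofReal (U ω * W ω) ∂μ) < ∞ := hUW.lintegral_lt_top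
  -- real-valued integrabilities on Ioi 0
  have hg_int : IntegrableOn (fun w => (μ {ω | w < W ω}).toReal) (Ioi (0:ℝ)) := by
    apply integrable_toReal_of_lintegral_ne_top hTmeas.aemeasurable
    rw [← lintegral_eq_lintegral_meas_lt μ (ae_of_all _ hWnonneg) hW.aemeasurable]
    exact hWlint.ne
  have hf_int : IntegrableOn (fun u => (μ {ω | u < U ω}).toReal) (Ioi (0:ℝ)) := by
    apply integrable_toReal_of_lintegral_ne_top hSmeas.aemeasurable
    rw [← lintegral_eq_lintegral_meas_lt μ (ae_of_all _ hUnonneg) hU.aemeasurable]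
    exact hUint.lintegral_lt_top.ne
  have hIa_int : IntegrableOn (fun u => (A u).toReal) (Ioi (0:ℝ)) := by
    apply integrable_toReal_of_lintegral_ne_top hAmeas.aemeasurable
    rw [hdouble]
    exact hUWlint.ne
  -- inner integrand integrability and value, for each u
  have ha_meas : ∀ u : ℝ, Measurable fun w : ℝ => μ {ω | u < U ω ∧ w < W ω} := by
    intro u
    have : Antitone fun w : ℝ => μ {ω | u < U ω ∧ w < W ω} :=
      fun w₁ w₂ h => measure_mono (fun ω hw => ⟨hw.1, lt_of_le_of_lt h hw.2⟩)
    exact this.measurable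
  have ha_int : ∀ u : ℝ, IntegrableOn
      (fun w => (μ {ω | u < U ω ∧ w < W ω}).toReal) (Ioi (0:ℝ)) := by
    intro u
    apply Integrable.mono' hg_int ((ha_meas u).ennreal_toReal.aestronglyMeasurable)
    apply ae_of_all
    intro w
    rw [Real.norm_eq_abs, abs_of_nonneg ENNReal.toReal_nonneg]
    exact ENNReal.toReal_mono (measure_ne_top μ _) (measure_mono (fun ω hw => hw.2))
  have ha_val : ∀ u : ℝ,
      (∫ w in Ioi (0:ℝ), (μ {ω | u < U ω ∧ w < W ω}).toReal) = (A u).toReal := by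
    intro u
    rw [hA_def]
    exact integral_toReal (ha_meas u).aemeasurable
      (ae_of_all _ (fun w => lt_of_le_of_lt (measure_mono (subset_univ _)) (measure_lt_top μ _)))
  -- inner integral computation
  have hinner : ∀ u : ℝ,
      (∫ w in Ioi (0:ℝ), ((μ {ω | u < U ω ∧ w < W ω}).toReal -
        (μ {ω | u < U ω}).toReal * (μ {ω | w < W ω}).toReal)) =
      (A u).toReal - (μ {ω | u < U ω}).toReal * ∫ ω, W ω ∂μ := by
    intro u
    rw [integral_sub (ha_int u) (hg_int.const_mul _), ha_val u, integral_const_mul, ← hWlayer]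
  -- main computation (the `<` version)
  have main : (∫ ω, U ω * W ω ∂μ) - (∫ ω, U ω ∂μ) * ∫ ω, W ω ∂μ =
      ∫ u in Set.Ioi (0 : ℝ), ∫ w in Set.Ioi (0 : ℝ),
        ((μ {ω | u < U ω ∧ w < W ω}).toReal -
          (μ {ω | u < U ω}).toReal * (μ {ω | w < W ω}).toReal) := by
    have houter : (∫ u in Set.Ioi (0 : ℝ), ∫ w in Set.Ioi (0 : ℝ),
        ((μ {ω | u < U ω ∧ w < W ω}).toReal -
          (μ {ω | u < U ω}).toReal * (μ {ω | w < W ω}).toReal)) =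
        ∫ u in Set.Ioi (0 : ℝ),
          ((A u).toReal - (μ {ω | u < U ω}).toReal * ∫ ω, W ω ∂μ) :=
      integral_congr_ae (ae_of_all _ hinner)
    rw [houter, integral_sub hIa_int (hf_int.mul_const _), integral_mul_const, ← hUlayer]
    congr 1
    rw [integral_toReal hAmeas.aemeasurable (ae_of_all _ hA_lt), hdouble]
    rw [← ofReal_integral_eq_lintegral_ofReal hUW
      (ae_of_all _ (fun ω => mul_nonneg (hUnonneg ω) (hWnonneg ω)))]
    rw [ENNReal.toReal_ofReal]
    exact integral_nonneg (fun ω => mul_nonneg (hUnonneg ω) (hWnonneg ω))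
  -- the two integrands agree pointwise
  have hpoint : ∀ u w : ℝ,
      ((μ {ω | U ω ≤ u ∧ W ω ≤ w}).toReal -
        (μ {ω | U ω ≤ u}).toReal * (μ {ω | W ω ≤ w}).toReal) =
      ((μ {ω | u < U ω ∧ w < W ω}).toReal -
        (μ {ω | u < U ω}).toReal * (μ {ω | w < W ω}).toReal) := by
    intro u w
    have hAm : MeasurableSet {ω | U ω ≤ u} := measurableSet_le hU measurable_const
    have hBm : MeasurableSet {ω | W ω ≤ w} := measurableSet_le hW measurable_const
    have hcomplU : {ω | u < U ω} = {ω | U ω ≤ u}ᶜ := by ext ω; simp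
    have hcomplW : {ω | w < W ω} = {ω | W ω ≤ w}ᶜ := by ext ω; simp
    have hcomplUW : {ω | u < U ω ∧ w < W ω} = ({ω | U ω ≤ u} ∪ {ω | W ω ≤ w})ᶜ := by
      ext ω; simp [not_le]
    have hincl := measure_union_add_inter (μ := μ) {ω | U ω ≤ u} hBm
    have h1 : (μ ({ω | U ω ≤ u} ∪ {ω | W ω ≤ w})).toReal +
        (μ ({ω | U ω ≤ u} ∩ {ω | W ω ≤ w})).toReal =
        (μ {ω | U ω ≤ u}).toReal + (μ {ω | W ω ≤ w}).toReal := by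
      rw [← ENNReal.toReal_add (measure_ne_top μ _) (measure_ne_top μ _),
        ← ENNReal.toReal_add (measure_ne_top μ _) (measure_ne_top μ _), hincl]
    have hc : ∀ s : Set Ω, MeasurableSet s → (μ sᶜ).toReal = 1 - (μ s).toReal := by
      intro s hs
      rw [prob_compl_eq_one_sub hs, ENNReal.toReal_sub_of_le prob_le_one one_ne_top,
        ENNReal.toReal_one]
    have h2 := hc _ hAm
    have h3 := hc _ hBm
    have h4 := hc _ (hAm.union hBm)
    have hinter : {ω | U ω ≤ u ∧ W ω ≤ w} = {ω | U ω ≤ u} ∩ {ω | W ω ≤ w} := rfl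
    rw [hcomplU, hcomplW, hcomplUW, hinter, h2, h3, h4]
    nlinarith [h1]
  constructor
  · rw [main]
    apply integral_congr_ae
    apply ae_of_all
    intro u
    apply integral_congr_ae
    apply ae_of_all
    intro w
    exact (hpoint u w).symm
  · exact main
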